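/- Coppel-type growth bound: let A be a real n×n matrix. Then for every t ≥ 0 and every vector v ∈ ℝⁿ, ‖exp(tA) v‖₂ ≤ e^{t·μ₂(A)} ‖v‖₂, where exp denotes the matrix exponential. Consequently every solution of ẋ = Ax satisfies ‖x(t)‖₂ ≤ e^{t·μ₂(A)} ‖x(0)‖₂ for t ≥ 0. -/

import Mathlib

open Matrix
open scoped RealInnerProductSpace

/-- Symmetric part of a real square matrix: `(A + Aᵀ)/2`. -/
noncomputable def symPart {n : ℕ} (A : Matrix (Fin n) (Fin n) ℝ) : Matrix (Fin n) (Fin n) ℝ :=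
  (1 / 2 : ℝ) • (A + Aᵀ)

theorem symPart_isHermitian {n : ℕ} (A : Matrix (Fin n) (Fin n) ℝ) :
    (symPart A).IsHermitian := by
  ext i j
  simp [symPart, Matrix.IsHermitian, Matrix.conjTranspose_apply, mul_comm, add_comm]
  ring

/-- Logarithmic 2-norm of a real square matrix: the largest eigenvalue of its
symmetric part `(A + Aᵀ)/2`. -/
noncomputable def mu2 {n : ℕ} (A : Matrix (Fin n) (Fin n) ℝ) : ℝ :=
  ⨆ i, (symPart_isHermitian A).eigenvalues i

/-- Spectral norm of a real matrix: the operator norm induced by the Euclidean norm. -/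
noncomputable def specNorm {m n : ℕ} (A : Matrix (Fin m) (Fin n) ℝ) : ℝ :=
  ‖LinearMap.toContinuousLinearMap (Matrix.toEuclideanLin A)‖

/-- A real square matrix is Hurwitz if every complex eigenvalue (i.e. every element of the
complex spectrum of its complexification) has strictly negative real part. -/
def IsHurwitz {n : ℕ} (A : Matrix (Fin n) (Fin n) ℝ) : Prop :=
  ∀ μ ∈ spectrum ℂ (A.map (Complex.ofReal ·)), μ.re < 0

/-- Rayleigh-type bound: `⟪v, A v⟫ ≤ μ₂(A) ‖v‖²`. -/
lemma inner_toEuclideanLin_le {n : ℕ} (A : Matrix (Fin n) (Fin n) ℝ)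
    (v : EuclideanSpace ℝ (Fin n)) :
    ⟪v, Matrix.toEuclideanLin A v⟫ ≤ mu2 A * ‖v‖ ^ 2 := by
  have hS := symPart_isHermitian A
  set b := hS.eigenvectorBasis with hb
  have h1 : ⟪v, Matrix.toEuclideanLin A v⟫ = ⟪v, Matrix.toEuclideanLin (symPart A) v⟫ := by
    have hAT : ⟪v, Matrix.toEuclideanLin Aᵀ v⟫ = ⟪v, Matrix.toEuclideanLin A v⟫ := by
      set w : Fin n → ℝ := (WithLp.equiv 2 (Fin n → ℝ)) v with hw
      show (Aᵀ *ᵥ w) ⬝ᵥ w = (A *ᵥ w) ⬝ᵥ w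
      rw [dotProduct_comm, Matrix.dotProduct_mulVec, Matrix.vecMul_transpose]
    simp only [symPart, _root_.map_smul, map_add, LinearMap.add_apply, LinearMap.smul_apply,
      inner_add_right, real_inner_smul_right, hAT]
    ring
  rw [h1]
  have hsym : (Matrix.toEuclideanLin (symPart A)).IsSymmetric :=
    Matrix.isHermitian_iff_isSymmetric.mp hS
  have key : ⟪v, Matrix.toEuclideanLin (symPart A) v⟫
      = ∑ i, hS.eigenvalues i * (⟪v, b i⟫ * ⟪b i, v⟫) := by
    rw [← b.sum_inner_mul_inner v (Matrix.toEuclideanLin (symPart A) v)]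
    congr 1; ext i
    have : ⟪b i, Matrix.toEuclideanLin (symPart A) v⟫
        = ⟪Matrix.toEuclideanLin (symPart A) (b i), v⟫ := (hsym (b i) v).symm
    rw [this]
    have hev : Matrix.toEuclideanLin (symPart A) (b i) = hS.eigenvalues i • b i := by
      apply (WithLp.equiv 2 _).injective
      simpa [toEuclideanLin_apply] using hS.mulVec_eigenvectorBasis i
    rw [hev, real_inner_smul_left]
    ring
  rw [key]
  have hnorm : ∑ i, ⟪v, b i⟫ * ⟪b i, v⟫ = ‖v‖ ^ 2 := by
    rw [b.sum_inner_mul_inner v v, real_inner_self_eq_norm_sq]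
  calc ∑ i, hS.eigenvalues i * (⟪v, b i⟫ * ⟪b i, v⟫)
      ≤ ∑ i, mu2 A * (⟪v, b i⟫ * ⟪b i, v⟫) := by
        apply Finset.sum_le_sum
        intro i _
        have hle : hS.eigenvalues i ≤ mu2 A :=
          le_ciSup (Set.Finite.bddAbove (Set.finite_range _)) i
        have hpos : 0 ≤ ⟪v, b i⟫ * ⟪b i, v⟫ := by
          rw [real_inner_comm v (b i)]; exact mul_self_nonneg _
        exact mul_le_mul_of_nonneg_right hle hpos
    _ = mu2 A * ‖v‖ ^ 2 := by rw [← Finset.mul_sum, hnorm]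

/-- Grönwall-type bound for a linear vector field with log-norm bound `μ`. -/
lemma growth_bound {n : ℕ} (μ : ℝ)
    (L : EuclideanSpace ℝ (Fin n) →ₗ[ℝ] EuclideanSpace ℝ (Fin n))
    (hL : ∀ v : EuclideanSpace ℝ (Fin n), ⟪v, L v⟫ ≤ μ * ‖v‖ ^ 2)
    (x : ℝ → EuclideanSpace ℝ (Fin n))
    (hx : ∀ t : ℝ, 0 ≤ t → HasDerivAt x (L (x t)) t) :
    ∀ t : ℝ, 0 ≤ t → ‖x t‖ ≤ Real.exp (t * μ) * ‖x 0‖ := by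
  set g : ℝ → ℝ := fun t => ⟪x t, x t⟫ with hgdef
  have hg : ∀ t : ℝ, 0 ≤ t → HasDerivAt g (2 * ⟪x t, L (x t)⟫) t := by
    intro t ht
    have := (hx t ht).inner ℝ (hx t ht)
    refine this.congr_deriv ?_
    rw [real_inner_comm (L (x t)) (x t)]
    ring
  set f : ℝ → ℝ := fun t => Real.exp (-(2 * μ * t)) * g t with hfdef
  have hf : ∀ t : ℝ, 0 ≤ t → HasDerivAt f
      (-(2 * μ) * Real.exp (-(2 * μ * t)) * g t
        + Real.exp (-(2 * μ * t)) * (2 * ⟪x t, L (x t)⟫)) t := by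
    intro t ht
    have he : HasDerivAt (fun t : ℝ => Real.exp (-(2 * μ * t)))
        (-(2 * μ) * Real.exp (-(2 * μ * t))) t := by
      have h1 : HasDerivAt (fun t : ℝ => -(2 * μ * t)) (-(2 * μ)) t := by
        exact (((hasDerivAt_id t).const_mul (2 * μ)).neg).congr_deriv (by simp)
      refine ((Real.hasDerivAt_exp (-(2 * μ * t))).comp t h1).congr_deriv ?_
      ring
    exact he.mul (hg t ht)
  have hanti : AntitoneOn f (Set.Ici (0 : ℝ)) := by
    apply antitoneOn_of_deriv_nonpos (convex_Ici 0)
    · intro t ht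
      exact (hf t ht).continuousAt.continuousWithinAt
    · rw [interior_Ici]
      intro t ht
      exact ((hf t (le_of_lt ht)).differentiableAt).differentiableWithinAt
    · rw [interior_Ici]
      intro t ht
      rw [(hf t ht.le).deriv]
      have h1 : ⟪x t, L (x t)⟫ ≤ μ * g t := by
        have := hL (x t)
        rwa [← real_inner_self_eq_norm_sq] at this
      nlinarith [Real.exp_pos (-(2 * μ * t))]
  intro t ht
  have hft : f t ≤ f 0 := hanti (Set.self_mem_Ici) ht ht
  have hf0 : f 0 = g 0 := by simp [hfdef]
  have hgt : g t ≤ Real.exp (2 * μ * t) * g 0 := by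
    have h2 := mul_le_mul_of_nonneg_left hft (Real.exp_nonneg (2 * μ * t))
    rw [hf0] at h2
    calc g t = Real.exp (2 * μ * t) * (Real.exp (-(2 * μ * t)) * g t) := by
          rw [← mul_assoc, ← Real.exp_add]; simp
      _ ≤ Real.exp (2 * μ * t) * g 0 := h2
  have hsq : ‖x t‖ ^ 2 ≤ (Real.exp (t * μ) * ‖x 0‖) ^ 2 := by
    have e1 : ‖x t‖ ^ 2 = g t := (real_inner_self_eq_norm_sq (x t)).symm
    have e2 : (Real.exp (t * μ) * ‖x 0‖) ^ 2 = Real.exp (2 * μ * t) * g 0 := by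
      rw [mul_pow, ← real_inner_self_eq_norm_sq, pow_two, ← Real.exp_add]
      ring_nf
      rfl
    rw [e1, e2]; exact hgt
  calc ‖x t‖ = Real.sqrt (‖x t‖ ^ 2) := (Real.sqrt_sq (norm_nonneg _)).symm
    _ ≤ Real.sqrt ((Real.exp (t * μ) * ‖x 0‖) ^ 2) := Real.sqrt_le_sqrt hsq
    _ = Real.exp (t * μ) * ‖x 0‖ := Real.sqrt_sq (by positivity)

/-- Derivative of `t ↦ exp(tA) v`. -/
lemma hasDerivAt_expMatrix_apply {n : ℕ} (A : Matrix (Fin n) (Fin n) ℝ)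
    (v : EuclideanSpace ℝ (Fin n)) (t : ℝ) :
    HasDerivAt (fun s : ℝ => Matrix.toEuclideanLin (NormedSpace.exp (s • A)) v)
      (Matrix.toEuclideanLin A (Matrix.toEuclideanLin (NormedSpace.exp (t • A)) v)) t := by
  letI : SeminormedRing (Matrix (Fin n) (Fin n) ℝ) := Matrix.linftyOpSemiNormedRing
  letI : NormedRing (Matrix (Fin n) (Fin n) ℝ) := Matrix.linftyOpNormedRing
  letI : NormedAlgebra ℝ (Matrix (Fin n) (Fin n) ℝ) := Matrix.linftyOpNormedAlgebra
  have hD : HasDerivAt (fun s : ℝ => NormedSpace.exp (s • A))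
      (A * NormedSpace.exp (t • A)) t := hasDerivAt_exp_smul_const' A t
  let Φ : Matrix (Fin n) (Fin n) ℝ →ₗ[ℝ] EuclideanSpace ℝ (Fin n) :=
    { toFun := fun M => Matrix.toEuclideanLin M v
      map_add' := by intro M N; simp
      map_smul' := by intro c M; simp }
  have hΦ : HasDerivAt (fun s : ℝ => Φ (NormedSpace.exp (s • A)))
      (Φ (A * NormedSpace.exp (t • A))) t :=
    (Φ.toContinuousLinearMap.hasFDerivAt).comp_hasDerivAt t hD
  convert hΦ using 1
  show _ = Matrix.toEuclideanLin (A * NormedSpace.exp (t • A)) v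
  apply (WithLp.equiv 2 _).injective
  simp [toEuclideanLin_apply, ← Matrix.mulVec_mulVec]
  rfl

/-- Coppel-type growth bound: for all `t ≥ 0` and vectors `v`,
`‖exp(tA) v‖₂ ≤ e^{t μ₂(A)} ‖v‖₂`; consequently every solution of `ẋ = Ax` satisfies
`‖x(t)‖₂ ≤ e^{t μ₂(A)} ‖x(0)‖₂` for `t ≥ 0`. -/
theorem coppel_growth_bound {n : ℕ} (A : Matrix (Fin n) (Fin n) ℝ) :
    (∀ t : ℝ, 0 ≤ t → ∀ v : EuclideanSpace ℝ (Fin n),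
      ‖Matrix.toEuclideanLin (NormedSpace.exp (t • A)) v‖ ≤
        Real.exp (t * mu2 A) * ‖v‖) ∧
    (∀ x : ℝ → EuclideanSpace ℝ (Fin n),
      (∀ t : ℝ, 0 ≤ t → HasDerivAt x (Matrix.toEuclideanLin A (x t)) t) →
      ∀ t : ℝ, 0 ≤ t → ‖x t‖ ≤ Real.exp (t * mu2 A) * ‖x 0‖) := by
  have part2 : ∀ x : ℝ → EuclideanSpace ℝ (Fin n),
      (∀ t : ℝ, 0 ≤ t → HasDerivAt x (Matrix.toEuclideanLin A (x t)) t) →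
      ∀ t : ℝ, 0 ≤ t → ‖x t‖ ≤ Real.exp (t * mu2 A) * ‖x 0‖ :=
    fun x hx => growth_bound (mu2 A) (Matrix.toEuclideanLin A)
      (inner_toEuclideanLin_le A) x hx
  refine ⟨?_, part2⟩
  intro t ht v
  have h0 : Matrix.toEuclideanLin (1 : Matrix (Fin n) (Fin n) ℝ) v = v := by
    apply (WithLp.equiv 2 _).injective
    simp [toEuclideanLin_apply]
  have := part2 (fun s => Matrix.toEuclideanLin (NormedSpace.exp (s • A)) v)
    (fun s _ => hasDerivAt_expMatrix_apply A v s) t ht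
  simpa [h0] using this
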